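/- Let ρ, p₁, p₂, p₃ be real numbers, and on ℝ⁴ let η(v,w) = -v₀w₀ + v₁w₁ + v₂w₂ + v₃w₃ be the Minkowski inner product, with a vector v called timelike when η(v,v) < 0. Let T be the bilinear form T(v,w) = ρ v₀w₀ + p₁v₁w₁ + p₂v₂w₂ + p₃v₃w₃ (the lowered-index form of the diagonal stress-energy tensor diag(-ρ, p₁, p₂, p₃)) and let its Minkowski trace be T̄ = -ρ + p₁ + p₂ + p₃. Then the strong energy condition T(v,v) ≥ (1/2) T̄ η(v,v) holds for all timelike v ∈ ℝ⁴ if and only if ρ + pᵢ ≥ 0 for each i ∈ {1,2,3} and ρ + p₁ + p₂ + p₃ ≥ 0. -/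
import Mathlib


/-- Minkowski inner product on ℝ⁴. -/
noncomputable def minkowski (v w : Fin 4 → ℝ) : ℝ :=
  -(v 0 * w 0) + v 1 * w 1 + v 2 * w 2 + v 3 * w 3

/-- Lowered-index bilinear form of the diagonal stress-energy tensor diag(-ρ, p₁, p₂, p₃). -/
noncomputable def stressEnergy (ρ p₁ p₂ p₃ : ℝ) (v w : Fin 4 → ℝ) : ℝ :=
  ρ * (v 0 * w 0) + p₁ * (v 1 * w 1) + p₂ * (v 2 * w 2) + p₃ * (v 3 * w 3)

/-- If `b ≤ a * u` for all nonnegative `u`, then `a` is nonnegative. -/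
lemma sec_key_aux (a b : ℝ) (h : ∀ u : ℝ, 0 ≤ u → b ≤ a * u) : 0 ≤ a := by
  by_contra ha
  push_neg at ha
  have h1 := h (max 0 ((b - 1) / a)) (le_max_left _ _)
  have heq : a * ((b - 1) / a) = b - 1 := mul_div_cancel₀ _ (ne_of_lt ha)
  rcases le_total 0 ((b - 1) / a) with h' | h'
  · rw [max_eq_right h', heq] at h1
    linarith
  · rw [max_eq_left h'] at h1
    nlinarith

/-- The strong energy condition for a type-one stress-energy tensor holds iff
ρ + pᵢ ≥ 0 for each i and ρ + p₁ + p₂ + p₃ ≥ 0. -/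
theorem strong_energy_condition_iff (ρ p₁ p₂ p₃ : ℝ) :
    (∀ v : Fin 4 → ℝ, minkowski v v < 0 →
      stressEnergy ρ p₁ p₂ p₃ v v ≥ (1 / 2) * (-ρ + p₁ + p₂ + p₃) * minkowski v v) ↔
    (ρ + p₁ ≥ 0 ∧ ρ + p₂ ≥ 0 ∧ ρ + p₃ ≥ 0 ∧ ρ + p₁ + p₂ + p₃ ≥ 0) := by
  constructor
  · intro h
    have g1 : 0 ≤ ρ + p₁ := by
      apply sec_key_aux (ρ + p₁) (-(1/2) * (-ρ + p₁ + p₂ + p₃) - ρ)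
      intro u hu
      have hts : Real.sqrt (1 + u) * Real.sqrt (1 + u) = 1 + u :=
        Real.mul_self_sqrt (by linarith)
      have hss : Real.sqrt u * Real.sqrt u = u := Real.mul_self_sqrt hu
      have hv := h ![Real.sqrt (1 + u), Real.sqrt u, 0, 0] (by
        simp [minkowski, hts, hss])
      simp [minkowski, stressEnergy, hts, hss] at hv
      nlinarith [hv]
    have g2 : 0 ≤ ρ + p₂ := by
      apply sec_key_aux (ρ + p₂) (-(1/2) * (-ρ + p₁ + p₂ + p₃) - ρ)
      intro u hu
      have hts : Real.sqrt (1 + u) * Real.sqrt (1 + u) = 1 + u :=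
        Real.mul_self_sqrt (by linarith)
      have hss : Real.sqrt u * Real.sqrt u = u := Real.mul_self_sqrt hu
      have hv := h ![Real.sqrt (1 + u), 0, Real.sqrt u, 0] (by
        simp [minkowski, hts, hss])
      simp [minkowski, stressEnergy, hts, hss] at hv
      nlinarith [hv]
    have g3 : 0 ≤ ρ + p₃ := by
      apply sec_key_aux (ρ + p₃) (-(1/2) * (-ρ + p₁ + p₂ + p₃) - ρ)
      intro u hu
      have hts : Real.sqrt (1 + u) * Real.sqrt (1 + u) = 1 + u :=
        Real.mul_self_sqrt (by linarith)
      have hss : Real.sqrt u * Real.sqrt u = u := Real.mul_self_sqrt hu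
      have hv := h ![Real.sqrt (1 + u), 0, 0, Real.sqrt u] (by
        simp [minkowski, hts, hss])
      simp [minkowski, stressEnergy, hts, hss] at hv
      nlinarith [hv]
    have g4 : 0 ≤ ρ + p₁ + p₂ + p₃ := by
      have hv := h ![1, 0, 0, 0] (by simp [minkowski])
      simp [minkowski, stressEnergy] at hv
      nlinarith [hv]
    exact ⟨g1, g2, g3, g4⟩
  · rintro ⟨h1, h2, h3, h4⟩ v hv
    simp only [minkowski, stressEnergy] at *
    nlinarith [mul_nonneg h1 (mul_self_nonneg (v 1)),
      mul_nonneg h2 (mul_self_nonneg (v 2)),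
      mul_nonneg h3 (mul_self_nonneg (v 3)),
      mul_nonneg h4 (by linarith : (0:ℝ) ≤ v 0 * v 0 - v 1 * v 1 - v 2 * v 2 - v 3 * v 3)]
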